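/- The successor weighting W on the orbit Brauer graph Γ̄ associated to a free Brauer action of a finite abelian group G on a Brauer graph (Γ, 𝔬, m) is a Brauer weighting; that is, ord(μ̄) divides m̄(μ̄) for every vertex μ̄ of Γ̄. -/

import Mathlib

/-- A Brauer graph `(Γ, 𝔬, m)`, presented via half-edges: `H` is the (finite, nonempty)
set of half-edges, `σ` is the successor permutation whose cycle at a vertex lists the
incident half-edges in the cyclic order `𝔬` (a loop contributes two half-edges, i.e. is
"listed twice"), `ι` is the fixed-point-free involution pairing the two half-edges of
each edge, `v` assigns to each half-edge its vertex (so the fibres of `v` are exactly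
the cycles of `σ`), the graph is connected, and `m` is the multiplicity function. -/
structure BrauerGraph where
  H : Type
  V : Type
  fintypeH : Fintype H
  decEqH : DecidableEq H
  fintypeV : Fintype V
  decEqV : DecidableEq V
  nonemptyH : Nonempty H
  σ : Equiv.Perm H
  ι : Equiv.Perm H
  ι_invol : ∀ h, ι (ι h) = h
  ι_ne : ∀ h, ι h ≠ h
  v : H → V
  v_surj : Function.Surjective v
  v_eq_iff : ∀ h h', v h = v h' ↔ ∃ n : ℤ, (σ ^ n) h = h'
  connected : ∀ h h' : H, ∃ g ∈ Subgroup.closure ({σ, ι} : Set (Equiv.Perm H)), g h = h'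
  m : V → ℕ
  m_pos : ∀ μ, 0 < m μ

attribute [instance] BrauerGraph.fintypeH BrauerGraph.decEqH
attribute [instance] BrauerGraph.fintypeV BrauerGraph.decEqV

namespace BrauerGraph

variable (Γ : BrauerGraph)

/-- The valency of a vertex: the number of incident half-edges (loops counted twice). -/
noncomputable def val (μ : Γ.V) : ℕ := Nat.card {h : Γ.H // Γ.v h = μ}

end BrauerGraph

/-- A Brauer action of a group `G` on a Brauer graph: a faithful action on half-edges
commuting with the successor permutation (i.e. orientation/successor preserving) and
with the edge involution (i.e. an action by graph automorphisms), and preserving the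
multiplicity function. -/
structure BrauerAction (G : Type) [Group G] (Γ : BrauerGraph) where
  e : G →* Equiv.Perm Γ.H
  faithful : Function.Injective e
  comm_σ : ∀ g h, e g (Γ.σ h) = Γ.σ (e g h)
  comm_ι : ∀ g h, e g (Γ.ι h) = Γ.ι (e g h)
  m_inv : ∀ g h, Γ.m (Γ.v (e g h)) = Γ.m (Γ.v h)

namespace BrauerAction

variable {G : Type} [Group G] {Γ : BrauerGraph}

/-- A free Brauer action: the action is free on the set of edges (loops counted twice,
i.e. on half-edges). -/
def IsFree (A : BrauerAction G Γ) : Prop := ∀ (g : G) (h : Γ.H), A.e g h = h → g = 1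

/-- The orbit equivalence relation of the action on half-edges. -/
def orbSetoid (A : BrauerAction G Γ) : Setoid Γ.H where
  r h h' := ∃ g : G, A.e g h = h'
  iseqv := by
    refine ⟨fun h => ⟨1, by simp⟩, ?_, ?_⟩
    · rintro h h' ⟨g, hg⟩
      exact ⟨g⁻¹, by rw [← hg, ← Equiv.Perm.mul_apply, ← map_mul]; simp⟩
    · rintro a b c ⟨g₁, hg₁⟩ ⟨g₂, hg₂⟩
      exact ⟨g₂ * g₁, by rw [map_mul, Equiv.Perm.mul_apply, hg₁, hg₂]⟩

/-- The orbit equivalence relation of the action restricted to a subset of half-edges. -/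
def subOrbSetoid (A : BrauerAction G Γ) (P : Γ.H → Prop) : Setoid {h : Γ.H // P h} where
  r p q := ∃ g : G, A.e g p.1 = q.1
  iseqv := by
    refine ⟨fun p => ⟨1, by simp⟩, ?_, ?_⟩
    · rintro p q ⟨g, hg⟩
      exact ⟨g⁻¹, by rw [← hg, ← Equiv.Perm.mul_apply, ← map_mul]; simp⟩
    · rintro a b c ⟨g₁, hg₁⟩ ⟨g₂, hg₂⟩
      exact ⟨g₂ * g₁, by rw [map_mul, Equiv.Perm.mul_apply, hg₁, hg₂]⟩

/-- The induced action of `g ∈ G` on vertices (defined via a chosen half-edge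
in the fibre of the vertex). -/
noncomputable def vmap (A : BrauerAction G Γ) (g : G) (μ : Γ.V) : Γ.V :=
  Γ.v (A.e g (Γ.v_surj μ).choose)

/-- The valency, in the orbit graph `Γ/G`, of the orbit vertex `μ̄` of `μ`: the number
of `G`-orbits of half-edges incident with a vertex in the orbit of `μ`. -/
noncomputable def orbVal (A : BrauerAction G Γ) (μ : Γ.V) : ℕ :=
  Nat.card (Quotient (A.subOrbSetoid (fun h => ∃ a : G, Γ.v (A.e a h) = μ)))

/-- The multiplicity function `m̄(μ̄) = val(μ)·m(μ)/val(μ̄)` of the orbit graph,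
expressed on representatives. -/
noncomputable def mbar (A : BrauerAction G Γ) (μ : Γ.V) : ℕ :=
  Γ.val μ * Γ.m μ / A.orbVal μ

end BrauerAction

namespace BrauerGraph

variable (Γ : BrauerGraph) {G : Type} [CommGroup G]

/-- `ω_μ`: the product of the values of a successor weighting `W` over all successor
pairs at the vertex `μ` (a successor pair `(i, σ i)` is identified with the half-edge
`i`). -/
noncomputable def omega (W : Γ.H → G) (μ : Γ.V) : G :=
  ∏ h ∈ Finset.univ.filter (fun h => Γ.v h = μ), W h

/-- `ω(i₁, i_{r+1})`: the product of the weights along the first `r` steps of the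
successor sequence of the half-edge `h`. -/
noncomputable def wpath (W : Γ.H → G) (h : Γ.H) (r : ℕ) : G :=
  ∏ t ∈ Finset.range r, W ((Γ.σ ^ t) h)

/-- The generating relation for the equivalence classes `[i, H_{μ,s}]` defining the
vertices of the Brauer covering graph `Δ_W`: a pair `(i, g)` (representing the pair of
`i` and the coset `H_{v i}·g`) is related to `(σ i, g·W(i))`, and to `(i, g·ω_{v i})`
(the latter identifies representatives of the same coset of `H_μ = ⟨ω_μ⟩`). -/
def covRel (W : Γ.H → G) : Γ.H × G → Γ.H × G → Prop := fun p q =>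
  (q.1 = Γ.σ p.1 ∧ q.2 = p.2 * W p.1) ∨ (q.1 = p.1 ∧ q.2 = p.2 * Γ.omega W (Γ.v p.1))

end BrauerGraph


section AuxLemmas

theorem BrauerGraph.val_pow_fix (Γ : BrauerGraph) (h : Γ.H) :
    0 < Γ.val (Γ.v h) ∧ (Γ.σ ^ Γ.val (Γ.v h)) h = h := by
  classical
  have hset : {h' : Γ.H | Γ.v h' = Γ.v h} = MulAction.orbit (Subgroup.zpowers Γ.σ) h := by
    ext x
    constructor
    · intro hx
      obtain ⟨n, hn⟩ := (Γ.v_eq_iff h x).mp hx.symm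
      exact ⟨⟨Γ.σ ^ n, Subgroup.zpow_mem _ (Subgroup.mem_zpowers _) n⟩, hn⟩
    · rintro ⟨⟨g, hg⟩, rfl⟩
      obtain ⟨n, rfl⟩ := Subgroup.mem_zpowers_iff.mp hg
      exact ((Γ.v_eq_iff h _).mpr ⟨n, rfl⟩).symm
  have hcard : Γ.val (Γ.v h) = Nat.card (MulAction.orbit (Subgroup.zpowers Γ.σ) h) := by
    rw [← hset]; rfl
  have hmp : Γ.val (Γ.v h) = Function.minimalPeriod (Γ.σ • ·) h := by
    rw [hcard, Nat.card_eq_fintype_card, ← MulAction.minimalPeriod_eq_card]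
  constructor
  · rw [hmp]
    exact Nat.pos_of_ne_zero (NeZero.ne _)
  · have := Function.isPeriodicPt_minimalPeriod (Γ.σ • ·) h
    rw [Function.IsPeriodicPt, Function.IsFixedPt, smul_iterate_apply] at this
    rw [hmp]
    exact this

namespace BrauerAction

variable {G : Type} [Group G] {Γ : BrauerGraph} (A : BrauerAction G Γ)

theorem e_pow_comm (g : G) (n : ℕ) (x : Γ.H) :
    A.e g ((Γ.σ ^ n) x) = (Γ.σ ^ n) (A.e g x) := by
  induction n with
  | zero => simp
  | succ n ih =>
    rw [pow_succ', Equiv.Perm.mul_apply, Equiv.Perm.mul_apply, A.comm_σ, ih]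

theorem e_mul_apply (a b : G) (x : Γ.H) : A.e (a * b) x = A.e a (A.e b x) := by
  rw [map_mul, Equiv.Perm.mul_apply]

end BrauerAction

end AuxLemmas

/-- The successor weighting `W` on the orbit graph `Γ̄` associated to a
free Brauer action of a finite abelian group `G` on a Brauer graph `(Γ, 𝔬, m)` is a
Brauer weighting: for every orbit vertex `μ̄` (represented by the vertex of a half-edge
`h`), the order of `ω_{μ̄}` divides `m̄(μ̄)`. -/
theorem associated_weighting_is_Brauer {G : Type} [CommGroup G] [Fintype G]
    (Γ : BrauerGraph) (A : BrauerAction G Γ) (hfree : A.IsFree)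
    (rep : Quotient A.orbSetoid → Γ.H)
    (hrep : ∀ q, Quotient.mk A.orbSetoid (rep q) = q)
    (W : Quotient A.orbSetoid → G)
    (hWdef : ∀ q, A.e (W q) (rep (Quotient.mk A.orbSetoid (Γ.σ (rep q)))) = Γ.σ (rep q))
    (h : Γ.H) :
    ∀ ω : G,
      ω = ∏ t ∈ Finset.range (A.orbVal (Γ.v h)),
            W (Quotient.mk A.orbSetoid ((Γ.σ ^ t) h)) →
      orderOf ω ∣ A.mbar (Γ.v h) := by
  classical
  intro ω hω
  obtain ⟨hcpos, hσc⟩ := Γ.val_pow_fix h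
  set c := Γ.val (Γ.v h) with hc
  -- additivity of the "return" relation
  have hRadd : ∀ a b : ℕ, (∃ g : G, A.e g ((Γ.σ ^ a) h) = h) →
      (∃ g : G, A.e g ((Γ.σ ^ b) h) = h) → (∃ g : G, A.e g ((Γ.σ ^ (a + b)) h) = h) := by
    rintro a b ⟨g, hg⟩ ⟨g', hg'⟩
    refine ⟨g * g', ?_⟩
    rw [pow_add, Equiv.Perm.mul_apply, A.e_mul_apply, A.e_pow_comm, hg', hg]
  have hRsub : ∀ a b : ℕ, (∃ g : G, A.e g ((Γ.σ ^ (a + b)) h) = h) →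
      (∃ g : G, A.e g ((Γ.σ ^ b) h) = h) → (∃ g : G, A.e g ((Γ.σ ^ a) h) = h) := by
    rintro a b ⟨k, hk⟩ ⟨g, hg⟩
    have hb : A.e g⁻¹ h = (Γ.σ ^ b) h := by
      apply (A.e g).injective
      rw [← A.e_mul_apply, mul_inv_cancel, map_one, Equiv.Perm.one_apply, hg]
    refine ⟨k * g⁻¹, ?_⟩
    have hab : (Γ.σ ^ a) ((Γ.σ ^ b) h) = (Γ.σ ^ (a + b)) h := by
      rw [pow_add, Equiv.Perm.mul_apply]
    rw [A.e_mul_apply, A.e_pow_comm, hb, hab]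
    exact hk
  have hex : ∃ n, 0 < n ∧ ∃ g : G, A.e g ((Γ.σ ^ n) h) = h :=
    ⟨c, hcpos, 1, by simp [hσc]⟩
  obtain ⟨hrpos, hRr⟩ := Nat.find_spec hex
  have hrmin : ∀ s, 0 < s → s < Nat.find hex → ¬ ∃ g : G, A.e g ((Γ.σ ^ s) h) = h :=
    fun s hs hlt hRs => Nat.find_min hex hlt ⟨hs, hRs⟩
  set r := Nat.find hex with hrdef
  have hRmul : ∀ q : ℕ, ∃ g : G, A.e g ((Γ.σ ^ (r * q)) h) = h := by
    intro q
    induction q with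
    | zero => exact ⟨1, by simp⟩
    | succ q ih =>
      rw [Nat.mul_succ]
      exact hRadd _ _ ih hRr
  have hrdvd : r ∣ c := by
    have h2 : ∃ g : G, A.e g ((Γ.σ ^ (c % r + r * (c / r))) h) = h := by
      rw [Nat.mod_add_div]; exact ⟨1, by simp [hσc]⟩
    have h1 := hRsub _ _ h2 (hRmul (c / r))
    rcases Nat.eq_zero_or_pos (c % r) with h0 | hpos
    · exact Nat.dvd_of_mod_eq_zero h0
    · exact absurd h1 (hrmin _ hpos (Nat.mod_lt _ hrpos))
  -- the value of orbVal
  have hvpow : ∀ t : ℕ, Γ.v ((Γ.σ ^ t) h) = Γ.v h :=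
    fun t => ((Γ.v_eq_iff h _).mpr ⟨(t : ℤ), by rw [zpow_natCast]⟩).symm
  have hzfix : ∀ k : ℤ, ((Γ.σ ^ (c : ℤ)) ^ k) h = h := by
    intro k
    have hfp : Function.IsFixedPt (Γ.σ ^ (c : ℤ)) h := by
      show (Γ.σ ^ (c : ℤ)) h = h
      rw [zpow_natCast]; exact hσc
    exact hfp.perm_zpow k
  have hzred : ∀ n : ℤ, (Γ.σ ^ n) h = (Γ.σ ^ (n % (c : ℤ)).toNat) h := by
    intro n
    conv_lhs => rw [← Int.emod_add_mul_ediv n (c : ℤ)]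
    rw [zpow_add, Equiv.Perm.mul_apply, zpow_mul, hzfix]
    rw [← zpow_natCast Γ.σ (n % (c : ℤ)).toNat,
      Int.toNat_of_nonneg (Int.emod_nonneg n (by exact_mod_cast hcpos.ne'))]
  have hPmem : ∀ t : ℕ, ∃ a : G, Γ.v (A.e a ((Γ.σ ^ t) h)) = Γ.v h :=
    fun t => ⟨1, by rw [map_one, Equiv.Perm.one_apply, hvpow]⟩
  set f : Fin r → Quotient (A.subOrbSetoid (fun x => ∃ a : G, Γ.v (A.e a x) = Γ.v h)) :=
    fun t => Quotient.mk (A.subOrbSetoid (fun x => ∃ a : G, Γ.v (A.e a x) = Γ.v h))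
      ⟨(Γ.σ ^ (t : ℕ)) h, hPmem t⟩ with hfdef
  have hstep : ∀ a b : ℕ, a ≤ b → (∃ g : G, A.e g ((Γ.σ ^ a) h) = (Γ.σ ^ b) h) →
      (∃ g : G, A.e g ((Γ.σ ^ (b - a)) h) = h) := by
    rintro a b hab ⟨g, hg⟩
    have h2 : (Γ.σ ^ a) (A.e g h) = (Γ.σ ^ b) h := by rw [← A.e_pow_comm, hg]
    have h3 : (Γ.σ ^ b) h = (Γ.σ ^ a) ((Γ.σ ^ (b - a)) h) := by
      rw [← Equiv.Perm.mul_apply, ← pow_add, Nat.add_sub_cancel' hab]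
    have h1 : A.e g h = (Γ.σ ^ (b - a)) h := (Γ.σ ^ a).injective (by rw [h2, h3])
    refine ⟨g⁻¹, ?_⟩
    rw [← h1, ← A.e_mul_apply, inv_mul_cancel, map_one, Equiv.Perm.one_apply]
  have hinj' : ∀ a b : Fin r, (a : ℕ) ≤ (b : ℕ) → f a = f b → a = b := by
    intro a b hle hab
    have hR := hstep a b hle (Quotient.exact hab)
    have hz : (b : ℕ) - (a : ℕ) = 0 := by
      by_contra hne
      exact hrmin _ (Nat.pos_of_ne_zero hne)
        (lt_of_le_of_lt (Nat.sub_le _ _) b.isLt) hR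
    exact Fin.ext (Nat.le_antisymm hle (Nat.sub_eq_zero_iff_le.mp hz))
  have hinj : Function.Injective f := by
    intro a b hab
    rcases le_total (a : ℕ) (b : ℕ) with hle | hle
    · exact hinj' a b hle hab
    · exact (hinj' b a hle hab.symm).symm
  have hsurj : Function.Surjective f := by
    intro q
    obtain ⟨⟨x, hx⟩, rfl⟩ := Quotient.exists_rep q
    obtain ⟨a, ha⟩ := hx
    obtain ⟨n, hn⟩ := (Γ.v_eq_iff h (A.e a x)).mp ha.symm
    have h4 : (Γ.σ ^ (n % (c : ℤ)).toNat) h = A.e a x := (hzred n).symm.trans hn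
    obtain ⟨g, hg⟩ := hRmul ((n % (c : ℤ)).toNat / r)
    have h5 : A.e g ((Γ.σ ^ (n % (c : ℤ)).toNat) h)
        = (Γ.σ ^ ((n % (c : ℤ)).toNat % r)) h := by
      conv_lhs => rw [← Nat.mod_add_div (n % (c : ℤ)).toNat r]
      rw [pow_add, Equiv.Perm.mul_apply, A.e_pow_comm, hg]
    refine ⟨⟨(n % (c : ℤ)).toNat % r, Nat.mod_lt _ hrpos⟩, ?_⟩
    apply Quotient.sound
    refine ⟨(g * a)⁻¹, ?_⟩
    have h6 : A.e (g * a) x = (Γ.σ ^ ((n % (c : ℤ)).toNat % r)) h := by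
      rw [A.e_mul_apply, ← h4, h5]
    show A.e (g * a)⁻¹ ((Γ.σ ^ ((n % (c : ℤ)).toNat % r)) h) = x
    rw [← h6, ← A.e_mul_apply, inv_mul_cancel, map_one, Equiv.Perm.one_apply]
  have horb : A.orbVal (Γ.v h) = r := by
    have hcards := Nat.card_eq_of_bijective f ⟨hinj, hsurj⟩
    rw [Nat.card_eq_fintype_card, Fintype.card_fin] at hcards
    unfold BrauerAction.orbVal
    rw [← hcards]
  -- the key covering computation
  have hQmkσ : ∀ t : ℕ,
      Quotient.mk A.orbSetoid (Γ.σ (rep (Quotient.mk A.orbSetoid ((Γ.σ ^ t) h))))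
      = Quotient.mk A.orbSetoid ((Γ.σ ^ (t + 1)) h) := by
    intro t
    obtain ⟨g, hg⟩ := Quotient.exact (hrep (Quotient.mk A.orbSetoid ((Γ.σ ^ t) h)))
    exact Quotient.sound ⟨g, by
      rw [A.comm_σ, hg, ← Equiv.Perm.mul_apply, ← pow_succ']⟩
  have hkey : ∀ t : ℕ,
      A.e (∏ s ∈ Finset.range t, W (Quotient.mk A.orbSetoid ((Γ.σ ^ s) h)))
        (rep (Quotient.mk A.orbSetoid ((Γ.σ ^ t) h)))
      = (Γ.σ ^ t) (rep (Quotient.mk A.orbSetoid h)) := by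
    intro t
    induction t with
    | zero => simp
    | succ t ih =>
      have hW := hWdef (Quotient.mk A.orbSetoid ((Γ.σ ^ t) h))
      rw [hQmkσ t] at hW
      rw [Finset.prod_range_succ, A.e_mul_apply, hW, A.comm_σ, ih,
        ← Equiv.Perm.mul_apply, ← pow_succ']
  have hper : ∀ t k : ℕ, Quotient.mk A.orbSetoid ((Γ.σ ^ (t + r * k)) h)
      = Quotient.mk A.orbSetoid ((Γ.σ ^ t) h) := by
    intro t k
    obtain ⟨g, hg⟩ := hRmul k
    exact Quotient.sound ⟨g, by rw [pow_add, Equiv.Perm.mul_apply, A.e_pow_comm, hg]⟩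
  have hωr : ω = ∏ t ∈ Finset.range r, W (Quotient.mk A.orbSetoid ((Γ.σ ^ t) h)) := by
    rw [hω, horb]
  have hprod : ∀ k : ℕ,
      (∏ s ∈ Finset.range (r * k), W (Quotient.mk A.orbSetoid ((Γ.σ ^ s) h))) = ω ^ k := by
    intro k
    induction k with
    | zero => simp
    | succ k ih =>
      rw [Nat.mul_succ, Finset.prod_range_add, ih, pow_succ]
      congr 1
      rw [hωr]
      refine Finset.prod_congr rfl fun i _ => ?_
      rw [add_comm (r * k) i, hper i k]
  obtain ⟨g0, hg0⟩ := Quotient.exact (hrep (Quotient.mk A.orbSetoid h))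
  have hfixrep : (Γ.σ ^ c) (rep (Quotient.mk A.orbSetoid h))
      = rep (Quotient.mk A.orbSetoid h) := by
    apply (A.e g0).injective
    rw [A.e_pow_comm, hg0, hσc]
  obtain ⟨k, hk⟩ := hrdvd
  have hmain := hkey c
  have hmkc : Quotient.mk A.orbSetoid ((Γ.σ ^ c) h) = Quotient.mk A.orbSetoid h := by
    rw [hσc]
  rw [hmkc, hfixrep, hk, hprod k] at hmain
  have horder : orderOf ω ∣ k := orderOf_dvd_of_pow_eq_one (hfree _ _ hmain)
  have hmbar : A.mbar (Γ.v h) = k * Γ.m (Γ.v h) := by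
    unfold BrauerAction.mbar
    rw [horb, ← hc, hk, mul_assoc, Nat.mul_div_cancel_left _ hrpos]
  rw [hmbar]
  exact horder.trans (dvd_mul_right _ _)
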